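/- Let V be the 24 vertices of the 24-cell with its 24 octahedral cells. Suppose B₁, B₂, B₃ : V → {0,1} are labelings such that every octahedral cell contains exactly three vertices with value 1 under each Bⱼ, suppose T : V → {0,1,2} is a labeling such that every octahedral cell contains each value of T exactly twice, and suppose the map v ↦ (B₁(v), B₂(v), B₃(v), T(v)) is injective on V (so all 24 combinations occur). Then each of the four functions f₁ = 12·B₁ + 6·B₂ + 3·B₃ + T + 1, f₂ = 12·B₁ + 6·B₂ + 2·T + B₃ + 1, f₃ = 12·B₁ + 4·T + 2·B₂ + B₃ + 1, and f₄ = 8·T + 4·B₁ + 2·B₂ + B₃ + 1 is a bijection from V onto {1, 2, …, 24} under which every octahedral cell has vertex-label sum 75. -/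

import Mathlib

open Finset

/-- The 24 vertices of the 24-cell: vectors in `ℤ⁴` with coordinates in `{-1,0,1}`
and sum of squares equal to `2` (i.e. the coordinate permutations of `(±1,±1,0,0)`). -/
def V24 : Finset (Fin 4 → ℤ) :=
  (Fintype.piFinset fun _ => ({-1, 0, 1} : Finset ℤ)).filter fun v => ∑ i, (v i) ^ 2 = 2

/-- A cell center of the 24-cell: one of the 16 vectors `(±1,±1,±1,±1)` or
the 8 vectors `±2eᵢ`. -/
def IsCenter (c : Fin 4 → ℤ) : Prop :=
  (∀ i, c i = 1 ∨ c i = -1) ∨ ∃ i, (c i = 2 ∨ c i = -2) ∧ ∀ j, j ≠ i → c j = 0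

instance : DecidablePred IsCenter := fun c => by unfold IsCenter; infer_instance

/-- The 24 cell centers of the 24-cell. -/
def Centers24 : Finset (Fin 4 → ℤ) :=
  (Fintype.piFinset fun _ => ({-2, -1, 0, 1, 2} : Finset ℤ)).filter IsCenter

/-- The octahedral cell with center `c`: the set of vertices `v` with `⟨v, c⟩ = 2`. -/
def cell (c : Fin 4 → ℤ) : Finset (Fin 4 → ℤ) :=
  V24.filter fun v => ∑ i, v i * c i = 2
lemma V24_card' : V24.card = 24 := by decide
lemma cell_card' : ∀ c ∈ Centers24, (cell c).card = 6 := by decide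

lemma sum_B' {S : Finset (Fin 4 → ℤ)} {B : (Fin 4 → ℤ) → Fin 2}
    (h : (S.filter fun v => B v = 1).card = 3) :
    ∑ v ∈ S, ((B v : ℕ) : ℤ) = 3 := by
  have : ∑ v ∈ S, ((B v : ℕ) : ℤ) = ∑ v ∈ S, (if B v = 1 then (1:ℤ) else 0) := by
    refine Finset.sum_congr rfl fun v _ => ?_
    have h2 := (B v).isLt
    by_cases hb : B v = 1
    · simp [hb]
    · have : (B v : ℕ) ≠ 1 := fun hh => hb (Fin.ext hh)
      simp only [hb, if_false]
      omega
  rw [this, Finset.sum_boole, h]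
  norm_num

lemma sum_T' {S : Finset (Fin 4 → ℤ)} {T : (Fin 4 → ℤ) → Fin 3}
    (h1 : (S.filter fun v => T v = 1).card = 2)
    (h2 : (S.filter fun v => T v = 2).card = 2) :
    ∑ v ∈ S, ((T v : ℕ) : ℤ) = 6 := by
  have : ∑ v ∈ S, ((T v : ℕ) : ℤ)
      = ∑ v ∈ S, ((if T v = 1 then (1:ℤ) else 0) + (if T v = 2 then (2:ℤ) else 0)) := by
    refine Finset.sum_congr rfl fun v _ => ?_
    have h3 := (T v).isLt
    by_cases ha : T v = 1
    · have : T v ≠ 2 := by rw [ha]; decide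
      simp [ha, this]
    · by_cases hb : T v = 2
      · simp [hb]
      · have e1 : (T v : ℕ) ≠ 1 := fun hh => ha (Fin.ext hh)
        have e2 : (T v : ℕ) ≠ 2 := fun hh => hb (Fin.ext hh)
        simp only [ha, hb, if_false]
        omega
  rw [this, Finset.sum_add_distrib, Finset.sum_boole, h1]
  have : ∑ v ∈ S, (if T v = 2 then (2:ℤ) else 0) = 4 := by
    rw [Finset.sum_ite, Finset.sum_const, Finset.sum_const, h2]
    simp
  rw [this]; norm_num

lemma bij_of' (f : (Fin 4 → ℤ) → ℤ) (hmem : ∀ v ∈ V24, f v ∈ Finset.Icc (1:ℤ) 24)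
    (hinjf : Set.InjOn f ↑V24) : Set.BijOn f ↑V24 (Set.Icc 1 24) := by
  have himg : V24.image f = Finset.Icc (1:ℤ) 24 := by
    apply Finset.eq_of_subset_of_card_le
    · intro y hy
      rcases Finset.mem_image.1 hy with ⟨v, hv, rfl⟩
      exact hmem v hv
    · rw [Finset.card_image_of_injOn hinjf, V24_card']
      simp [Int.card_Icc]
  refine ⟨fun v hv => ?_, hinjf, fun y hy => ?_⟩
  · have := hmem v hv
    simpa [Finset.mem_Icc, Set.mem_Icc] using this
  · have : y ∈ V24.image f := by rw [himg]; simpa [Finset.mem_Icc] using hy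
    rcases Finset.mem_image.1 this with ⟨v, hv, rfl⟩
    exact ⟨v, hv, rfl⟩


/-- Given three binary labelings `B₁, B₂, B₃` each putting exactly three `1`s on every
octahedral cell, and a ternary labeling `T` putting each of its values exactly twice on
every octahedral cell, such that the superimposition `v ↦ (B₁ v, B₂ v, B₃ v, T v)` is
injective on the vertices, each of the four linear combinations
`12B₁+6B₂+3B₃+T+1`, `12B₁+6B₂+2T+B₃+1`, `12B₁+4T+2B₂+B₃+1`, `8T+4B₁+2B₂+B₃+1`
is a magic 24-cell labeling: a bijection onto `{1, …, 24}` with all cell sums `75`. -/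
theorem stmt_10 (B₁ B₂ B₃ : (Fin 4 → ℤ) → Fin 2) (T : (Fin 4 → ℤ) → Fin 3)
    (hB₁ : ∀ c ∈ Centers24, ((cell c).filter fun v => B₁ v = 1).card = 3)
    (hB₂ : ∀ c ∈ Centers24, ((cell c).filter fun v => B₂ v = 1).card = 3)
    (hB₃ : ∀ c ∈ Centers24, ((cell c).filter fun v => B₃ v = 1).card = 3)
    (hT : ∀ c ∈ Centers24, ∀ t : Fin 3, ((cell c).filter fun v => T v = t).card = 2)
    (hinj : Set.InjOn (fun v => (B₁ v, B₂ v, B₃ v, T v)) ↑V24) :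
    ∀ f ∈ ({fun v => 12 * ((B₁ v : ℕ) : ℤ) + 6 * ((B₂ v : ℕ) : ℤ) +
              3 * ((B₃ v : ℕ) : ℤ) + ((T v : ℕ) : ℤ) + 1,
            fun v => 12 * ((B₁ v : ℕ) : ℤ) + 6 * ((B₂ v : ℕ) : ℤ) +
              2 * ((T v : ℕ) : ℤ) + ((B₃ v : ℕ) : ℤ) + 1,
            fun v => 12 * ((B₁ v : ℕ) : ℤ) + 4 * ((T v : ℕ) : ℤ) +
              2 * ((B₂ v : ℕ) : ℤ) + ((B₃ v : ℕ) : ℤ) + 1,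
            fun v => 8 * ((T v : ℕ) : ℤ) + 4 * ((B₁ v : ℕ) : ℤ) +
              2 * ((B₂ v : ℕ) : ℤ) + ((B₃ v : ℕ) : ℤ) + 1} :
          Set ((Fin 4 → ℤ) → ℤ)),
      Set.BijOn f ↑V24 (Set.Icc (1 : ℤ) 24) ∧
      ∀ c ∈ Centers24, ∑ v ∈ cell c, f v = 75 := by
  have hsum : ∀ (p q r s : ℤ), p + q + r + 2 * s = 23 →
      ∀ c ∈ Centers24, ∑ v ∈ cell c,
        (p * ((B₁ v : ℕ) : ℤ) + q * ((B₂ v : ℕ) : ℤ) + r * ((B₃ v : ℕ) : ℤ)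
          + s * ((T v : ℕ) : ℤ) + 1) = 75 := by
    intro p q r s hpqrs c hc
    have e1 := sum_B' (hB₁ c hc)
    have e2 := sum_B' (hB₂ c hc)
    have e3 := sum_B' (hB₃ c hc)
    have e4 := sum_T' (hT c hc 1) (hT c hc 2)
    have ec := cell_card' c hc
    rw [Finset.sum_add_distrib, Finset.sum_add_distrib, Finset.sum_add_distrib,
      Finset.sum_add_distrib, ← Finset.mul_sum, ← Finset.mul_sum, ← Finset.mul_sum,
      ← Finset.mul_sum, e1, e2, e3, e4, Finset.sum_const, ec]
    simp only [smul_eq_mul, nsmul_eq_mul]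
    push_cast
    linarith
  intro f hf
  have hb1 : ∀ v, ((B₁ v : ℕ) : ℤ) = 0 ∨ ((B₁ v : ℕ) : ℤ) = 1 := by
    intro v; have := (B₁ v).isLt; omega
  simp only [Set.mem_insert_iff, Set.mem_singleton_iff] at hf
  rcases hf with rfl | rfl | rfl | rfl
  · refine ⟨bij_of' _ (fun v _ => ?_) (fun v hv w hw heq => ?_), fun c hc => ?_⟩
    · have g1 := (B₁ v).isLt; have g2 := (B₂ v).isLt; have g3 := (B₃ v).isLt
      have g4 := (T v).isLt
      simp only [Finset.mem_Icc]; omega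
    · have g1 := (B₁ v).isLt; have g2 := (B₂ v).isLt; have g3 := (B₃ v).isLt
      have g4 := (T v).isLt
      have g1' := (B₁ w).isLt; have g2' := (B₂ w).isLt; have g3' := (B₃ w).isLt
      have g4' := (T w).isLt
      refine hinj hv hw ?_
      simp only [Prod.mk.injEq]
      exact ⟨Fin.ext (by omega), Fin.ext (by omega), Fin.ext (by omega), Fin.ext (by omega)⟩
    · have := hsum 12 6 3 1 (by norm_num) c hc
      simpa [one_mul] using this
  · refine ⟨bij_of' _ (fun v _ => ?_) (fun v hv w hw heq => ?_), fun c hc => ?_⟩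
    · have g1 := (B₁ v).isLt; have g2 := (B₂ v).isLt; have g3 := (B₃ v).isLt
      have g4 := (T v).isLt
      simp only [Finset.mem_Icc]; omega
    · have g1 := (B₁ v).isLt; have g2 := (B₂ v).isLt; have g3 := (B₃ v).isLt
      have g4 := (T v).isLt
      have g1' := (B₁ w).isLt; have g2' := (B₂ w).isLt; have g3' := (B₃ w).isLt
      have g4' := (T w).isLt
      refine hinj hv hw ?_
      simp only [Prod.mk.injEq]
      exact ⟨Fin.ext (by omega), Fin.ext (by omega), Fin.ext (by omega), Fin.ext (by omega)⟩
    · have := hsum 12 6 1 2 (by norm_num) c hc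
      rw [← this]
      refine Finset.sum_congr rfl fun v _ => by ring
  · refine ⟨bij_of' _ (fun v _ => ?_) (fun v hv w hw heq => ?_), fun c hc => ?_⟩
    · have g1 := (B₁ v).isLt; have g2 := (B₂ v).isLt; have g3 := (B₃ v).isLt
      have g4 := (T v).isLt
      simp only [Finset.mem_Icc]; omega
    · have g1 := (B₁ v).isLt; have g2 := (B₂ v).isLt; have g3 := (B₃ v).isLt
      have g4 := (T v).isLt
      have g1' := (B₁ w).isLt; have g2' := (B₂ w).isLt; have g3' := (B₃ w).isLt
      have g4' := (T w).isLt
      refine hinj hv hw ?_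
      simp only [Prod.mk.injEq]
      exact ⟨Fin.ext (by omega), Fin.ext (by omega), Fin.ext (by omega), Fin.ext (by omega)⟩
    · have := hsum 12 2 1 4 (by norm_num) c hc
      rw [← this]
      refine Finset.sum_congr rfl fun v _ => by ring
  · refine ⟨bij_of' _ (fun v _ => ?_) (fun v hv w hw heq => ?_), fun c hc => ?_⟩
    · have g1 := (B₁ v).isLt; have g2 := (B₂ v).isLt; have g3 := (B₃ v).isLt
      have g4 := (T v).isLt
      simp only [Finset.mem_Icc]; omega
    · have g1 := (B₁ v).isLt; have g2 := (B₂ v).isLt; have g3 := (B₃ v).isLt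
      have g4 := (T v).isLt
      have g1' := (B₁ w).isLt; have g2' := (B₂ w).isLt; have g3' := (B₃ w).isLt
      have g4' := (T w).isLt
      refine hinj hv hw ?_
      simp only [Prod.mk.injEq]
      exact ⟨Fin.ext (by omega), Fin.ext (by omega), Fin.ext (by omega), Fin.ext (by omega)⟩
    · have := hsum 4 2 1 8 (by norm_num) c hc
      rw [← this]
      refine Finset.sum_congr rfl fun v _ => by ring
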